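/- For unit vectors ε_1, ε_2 ∈ R^3, the matrix 4M = (I-α·ε_1)⊗(I+α·ε_1) + (I+α·ε_1)⊗(I-α·ε_1) + (I-α·ε_2)⊗(I+α·ε_2) + (I+α·ε_2)⊗(I-α·ε_2), i.e., M = I⊗I - (1/2)(α·ε_1)⊗(α·ε_1) - (1/2)(α·ε_2)⊗(α·ε_2); in particular M is a sum of four tensor products of positive semidefinite matrices and hence positive semidefinite. -/

import Mathlib

open scoped BigOperators ComplexOrder Kronecker
open Complex Matrix

/-- The Pauli matrices `σ₁, σ₂, σ₃`. -/
noncomputable def pauli : Fin 3 → Matrix (Fin 2) (Fin 2) ℂ :=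
  ![!![0, 1; 1, 0], !![0, -I; I, 0], !![1, 0; 0, -1]]

/-- The Dirac alpha matrices `αᵢ = [[0, σᵢ],[σᵢ, 0]]`. -/
noncomputable def alphaMat (i : Fin 3) : Matrix (Fin 2 ⊕ Fin 2) (Fin 2 ⊕ Fin 2) ℂ :=
  Matrix.fromBlocks 0 (pauli i) (pauli i) 0

/-- The contraction `α·ε = Σᵢ εᵢ αᵢ`. -/
noncomputable def alphaDot (ε : Fin 3 → ℝ) : Matrix (Fin 2 ⊕ Fin 2) (Fin 2 ⊕ Fin 2) ℂ :=
  ∑ i, (ε i : ℂ) • alphaMat i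

/-- The matrix `M = I⊗I - ½ (α·ε₁)⊗(α·ε₁) - ½ (α·ε₂)⊗(α·ε₂)`. -/
noncomputable def Mmat (ε₁ ε₂ : Fin 3 → ℝ) :
    Matrix ((Fin 2 ⊕ Fin 2) × (Fin 2 ⊕ Fin 2)) ((Fin 2 ⊕ Fin 2) × (Fin 2 ⊕ Fin 2)) ℂ :=
  (1 : Matrix (Fin 2 ⊕ Fin 2) (Fin 2 ⊕ Fin 2) ℂ) ⊗ₖ 1
    - (1 / 2 : ℂ) • (alphaDot ε₁ ⊗ₖ alphaDot ε₁)
    - (1 / 2 : ℂ) • (alphaDot ε₂ ⊗ₖ alphaDot ε₂)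

noncomputable def pauliDot (ε : Fin 3 → ℝ) : Matrix (Fin 2) (Fin 2) ℂ :=
  ∑ i, (ε i : ℂ) • pauli i

lemma alphaDot_eq (ε : Fin 3 → ℝ) :
    alphaDot ε = Matrix.fromBlocks 0 (pauliDot ε) (pauliDot ε) 0 := by
  simp [alphaDot, pauliDot, alphaMat, Fin.sum_univ_succ, Matrix.fromBlocks_smul,
    Matrix.fromBlocks_add]

lemma pauliDot_herm (ε : Fin 3 → ℝ) : (pauliDot ε)ᴴ = pauliDot ε := by
  ext i j
  fin_cases i <;> fin_cases j <;>
    simp [pauliDot, pauli, Fin.sum_univ_succ, Matrix.conjTranspose_apply]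

lemma pauliDot_sq (ε : Fin 3 → ℝ) (hε : ε 0 ^ 2 + ε 1 ^ 2 + ε 2 ^ 2 = 1) :
    pauliDot ε * pauliDot ε = 1 := by
  have h : (ε 0 : ℂ) ^ 2 + (ε 1 : ℂ) ^ 2 + (ε 2 : ℂ) ^ 2 = 1 := by
    exact_mod_cast hε
  ext i j
  fin_cases i <;> fin_cases j <;>
    simp [pauliDot, pauli, Fin.sum_univ_succ, Matrix.mul_apply, Matrix.one_apply,
      Complex.I_mul_I] <;>
    first
      | linear_combination -h
      | linear_combination (-(ε 1 : ℂ) ^ 2) * Complex.I_sq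
      | linear_combination h - (ε 1 : ℂ) ^ 2 * Complex.I_sq
      | ring

lemma alphaDot_herm (ε : Fin 3 → ℝ) : (alphaDot ε)ᴴ = alphaDot ε := by
  rw [alphaDot_eq, Matrix.fromBlocks_conjTranspose, pauliDot_herm]
  simp

lemma alphaDot_sq (ε : Fin 3 → ℝ) (hε : ε 0 ^ 2 + ε 1 ^ 2 + ε 2 ^ 2 = 1) :
    alphaDot ε * alphaDot ε = 1 := by
  rw [alphaDot_eq, Matrix.fromBlocks_multiply]
  simp [pauliDot_sq ε hε, Matrix.fromBlocks_one]

lemma psd_smul {n : Type*} [Fintype n] [DecidableEq n]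
    {A : Matrix n n ℂ} (hA : A.PosSemidef) {c : ℝ} (hc : 0 ≤ c) :
    ((c : ℂ) • A).PosSemidef := by
  refine ⟨?_, fun x => ?_⟩
  · unfold Matrix.IsHermitian
    rw [Matrix.conjTranspose_smul, hA.1]
    simp
  · exact (hA.smul (Complex.zero_le_real.mpr hc)).2 x

lemma conjTranspose_kronecker {m n : Type*} [Fintype m] [Fintype n]
    (A : Matrix m m ℂ) (B : Matrix n n ℂ) :
    (A ⊗ₖ B)ᴴ = Aᴴ ⊗ₖ Bᴴ := by
  ext ⟨i, j⟩ ⟨k, l⟩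
  simp [Matrix.conjTranspose_apply]

lemma psd_kronecker {m n : Type*} [Fintype m] [Fintype n] [DecidableEq m] [DecidableEq n]
    {A : Matrix m m ℂ} {B : Matrix n n ℂ} (hA : A.PosSemidef) (hB : B.PosSemidef) :
    (A ⊗ₖ B).PosSemidef := by
  exact hA.kronecker hB

lemma one_add_psd {n : Type*} [Fintype n] [DecidableEq n]
    {A : Matrix n n ℂ} (hH : Aᴴ = A) (hsq : A * A = 1) :
    (1 + A).PosSemidef := by
  have hmul : (1 + A)ᴴ * (1 + A) = (2 : ℂ) • (1 + A) := by
    rw [Matrix.conjTranspose_add, hH, Matrix.conjTranspose_one]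
    rw [add_mul, mul_add, mul_add, hsq, two_smul]
    simp only [Matrix.mul_one, Matrix.one_mul]
    abel
  have key : (1 + A) = ((1/2 : ℝ) : ℂ) • ((1 + A)ᴴ * (1 + A)) := by
    rw [hmul, smul_smul]
    norm_num
  rw [key]
  exact psd_smul (Matrix.posSemidef_conjTranspose_mul_self _) (by norm_num)

lemma one_sub_psd {n : Type*} [Fintype n] [DecidableEq n]
    {A : Matrix n n ℂ} (hH : Aᴴ = A) (hsq : A * A = 1) :
    (1 - A).PosSemidef := by
  have := one_add_psd (A := -A) (by rw [Matrix.conjTranspose_neg, hH]) (by simp [hsq])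
  simpa [sub_eq_add_neg] using this

lemma neg_kron {m n : Type*} [Fintype m] [Fintype n]
    (A : Matrix m m ℂ) (B : Matrix n n ℂ) : (-A) ⊗ₖ B = -(A ⊗ₖ B) := by
  ext ⟨i, j⟩ ⟨k, l⟩; simp

lemma kron_neg {m n : Type*} [Fintype m] [Fintype n]
    (A : Matrix m m ℂ) (B : Matrix n n ℂ) : A ⊗ₖ (-B) = -(A ⊗ₖ B) := by
  ext ⟨i, j⟩ ⟨k, l⟩; simp


/-- for unit vectors `ε₁, ε₂ ∈ ℝ³`,
`4M = (I-α·ε₁)⊗(I+α·ε₁) + (I+α·ε₁)⊗(I-α·ε₁) + (I-α·ε₂)⊗(I+α·ε₂) + (I+α·ε₂)⊗(I-α·ε₂)`,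
i.e. `M` is a sum of four tensor products of positive semidefinite matrices, and
hence `M` is positive semidefinite. -/
theorem four_M_decomposition (ε₁ ε₂ : Fin 3 → ℝ)
    (hε₁ : ε₁ 0 ^ 2 + ε₁ 1 ^ 2 + ε₁ 2 ^ 2 = 1)
    (hε₂ : ε₂ 0 ^ 2 + ε₂ 1 ^ 2 + ε₂ 2 ^ 2 = 1) :
    (4 : ℂ) • Mmat ε₁ ε₂ =
        (1 - alphaDot ε₁) ⊗ₖ (1 + alphaDot ε₁) + (1 + alphaDot ε₁) ⊗ₖ (1 - alphaDot ε₁)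
      + (1 - alphaDot ε₂) ⊗ₖ (1 + alphaDot ε₂) + (1 + alphaDot ε₂) ⊗ₖ (1 - alphaDot ε₂) ∧
    (1 - alphaDot ε₁).PosSemidef ∧ (1 + alphaDot ε₁).PosSemidef ∧
    (1 - alphaDot ε₂).PosSemidef ∧ (1 + alphaDot ε₂).PosSemidef ∧
    (Mmat ε₁ ε₂).PosSemidef := by
  have heq : (4 : ℂ) • Mmat ε₁ ε₂ =
        (1 - alphaDot ε₁) ⊗ₖ (1 + alphaDot ε₁) + (1 + alphaDot ε₁) ⊗ₖ (1 - alphaDot ε₁)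
      + (1 - alphaDot ε₂) ⊗ₖ (1 + alphaDot ε₂) + (1 + alphaDot ε₂) ⊗ₖ (1 - alphaDot ε₂) := by
    simp only [Mmat, sub_eq_add_neg, Matrix.add_kronecker, Matrix.kronecker_add,
      neg_kron, kron_neg, neg_neg]
    module
  have h1s := one_sub_psd (alphaDot_herm ε₁) (alphaDot_sq ε₁ hε₁)
  have h1a := one_add_psd (alphaDot_herm ε₁) (alphaDot_sq ε₁ hε₁)
  have h2s := one_sub_psd (alphaDot_herm ε₂) (alphaDot_sq ε₂ hε₂)
  have h2a := one_add_psd (alphaDot_herm ε₂) (alphaDot_sq ε₂ hε₂)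
  refine ⟨heq, h1s, h1a, h2s, h2a, ?_⟩
  have hM : Mmat ε₁ ε₂ = ((1/4 : ℝ) : ℂ) • ((4 : ℂ) • Mmat ε₁ ε₂) := by
    rw [smul_smul]; norm_num
  rw [hM, heq]
  exact psd_smul ((((psd_kronecker h1s h1a).add (psd_kronecker h1a h1s)).add
    (psd_kronecker h2s h2a)).add (psd_kronecker h2a h2s)) (by norm_num)
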